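/- Let Ω ⊂ ℝ² be a convex bounded set with nonempty interior whose two vertical support lines are both angular, and let K < ∞ denote the supremum over nonzero u ∈ U_Ω of (∫_Ω u_x² dx dy)/(∫_Ω u_y² dx dy). Let f : ℝ² → ℝ be continuous with f(ζ₁,ζ₂) = f(0,0) + αζ₁ + βζ₂ − aζ₁² + bζ₂² + o(|ζ|²) as |ζ| → 0, where a > 0, b > 0. If b/a < K, then the zero function u ≡ 0 is not a local minimum of the functional F(u) = ∫_Ω f(∇u(x,y)) dx dy on U_Ω with respect to the C¹ norm. -/

import Mathlib

set_option maxHeartbeats 1000000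


open MeasureTheory Real Set Filter Asymptotics

/-- The partial derivative `u_x` (defined via the full derivative; `0` where `u` is
not differentiable). -/
noncomputable def uX (u : ℝ × ℝ → ℝ) (p : ℝ × ℝ) : ℝ := fderiv ℝ u p (1, 0)

/-- The partial derivative `u_y`. -/
noncomputable def uY (u : ℝ × ℝ → ℝ) (p : ℝ × ℝ) : ℝ := fderiv ℝ u p (0, 1)

/-- Membership in the class `U_Ω`: continuous concave functions on `Ω`, differentiable
almost everywhere, with bounded gradient, vanishing on `∂Ω`. -/
def MemU (Ω : Set (ℝ × ℝ)) (u : ℝ × ℝ → ℝ) : Prop :=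
  ContinuousOn u (closure Ω) ∧ ConcaveOn ℝ Ω u ∧
    (∀ᵐ p ∂(volume.restrict Ω), DifferentiableAt ℝ u p) ∧
    (∃ C : ℝ, ∀ p ∈ Ω, DifferentiableAt ℝ u p → ‖fderiv ℝ u p‖ ≤ C) ∧
    (∀ p ∈ frontier Ω, u p = 0)

/-- `∫_Ω u_x² dx dy`. -/
noncomputable def Ix (Ω : Set (ℝ × ℝ)) (u : ℝ × ℝ → ℝ) : ℝ := ∫ p in Ω, (uX u p) ^ 2

/-- `∫_Ω u_y² dx dy`. -/
noncomputable def Iy (Ω : Set (ℝ × ℝ)) (u : ℝ × ℝ → ℝ) : ℝ := ∫ p in Ω, (uY u p) ^ 2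

/-- The abscissa of the left vertical support line of `Ω`. -/
noncomputable def leftX (Ω : Set (ℝ × ℝ)) : ℝ := sInf (Prod.fst '' Ω)

/-- The abscissa of the right vertical support line of `Ω`. -/
noncomputable def rightX (Ω : Set (ℝ × ℝ)) : ℝ := sSup (Prod.fst '' Ω)

/-- The vertical support line `{x = x₀}` of `Ω`, touching `Ω` at the contact point
`(x₀, p₂)`, is angular: every `(x,y) ∈ Ω` satisfies `|y - p₂| ≤ C|x - x₀|`. -/
def AngularSupportAt (Ω : Set (ℝ × ℝ)) (x₀ : ℝ) : Prop :=
  ∃ p₂ : ℝ, (x₀, p₂) ∈ closure Ω ∧ ∃ C > 0, ∀ q ∈ Ω, |q.2 - p₂| ≤ C * |q.1 - x₀|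

/-- The `C¹` norm `sup |u| + sup |u_x| + sup |u_y|`, the suprema over the derivatives
being taken over the points where they exist. -/
noncomputable def C1Norm (Ω : Set (ℝ × ℝ)) (u : ℝ × ℝ → ℝ) : ℝ :=
  sSup ((fun p => |u p|) '' Ω) +
    sSup ((fun p => |uX u p|) '' {p ∈ Ω | DifferentiableAt ℝ u p}) +
    sSup ((fun p => |uY u p|) '' {p ∈ Ω | DifferentiableAt ℝ u p})

/-- The resistance functional `F(u) = ∫_Ω f(∇u) dx dy`. -/
noncomputable def Fres (Ω : Set (ℝ × ℝ)) (f : ℝ × ℝ → ℝ) (u : ℝ × ℝ → ℝ) : ℝ :=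
  ∫ p in Ω, f (uX u p, uY u p)

/-- The zero function is a local minimum of `F` on `U_Ω` in the `C¹` norm. -/
def ZeroIsLocalMin (Ω : Set (ℝ × ℝ)) (f : ℝ × ℝ → ℝ) : Prop :=
  ∃ δ : ℝ, 0 < δ ∧ ∀ u : ℝ × ℝ → ℝ, MemU Ω u → C1Norm Ω u < δ →
    Fres Ω f (fun _ => 0) ≤ Fres Ω f u

/-- `n` is an outward normal of a support line to `Ω` at `ξ`. -/
def IsSupportDir (Ω : Set (ℝ × ℝ)) (ξ n : ℝ × ℝ) : Prop :=
  n ≠ 0 ∧ ∀ q ∈ Ω, n.1 * q.1 + n.2 * q.2 ≤ n.1 * ξ.1 + n.2 * ξ.2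

/-- `ξ` is a regular boundary point: the support line at `ξ` is unique. -/
def IsRegularPoint (Ω : Set (ℝ × ℝ)) (ξ : ℝ × ℝ) : Prop :=
  ξ ∈ frontier Ω ∧
    ∀ n m : ℝ × ℝ, IsSupportDir Ω ξ n → IsSupportDir Ω ξ m → ∃ t : ℝ, m = t • n

/-- `ξ` is a singular boundary point: `Ω` has more than one support line at `ξ`. -/
def IsSingularPoint (Ω : Set (ℝ × ℝ)) (ξ : ℝ × ℝ) : Prop :=
  ξ ∈ frontier Ω ∧
    ∃ n m : ℝ × ℝ, IsSupportDir Ω ξ n ∧ IsSupportDir Ω ξ m ∧ ¬∃ t : ℝ, m = t • n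

/-- Both vertical support lines angular, `K` the (finite) supremum of
`(∫_Ω u_x²)/(∫_Ω u_y²)` over nonzero `u ∈ U_Ω`. If
`f(ζ) = f(0) + αζ₁ + βζ₂ - aζ₁² + bζ₂² + o(|ζ|²)` with `a, b > 0` and `b/a < K`,
then `u ≡ 0` is not a local minimum. -/
lemma exists_right_deriv {A B : ℝ} {g : ℝ → ℝ} (hconc : ConcaveOn ℝ (Set.Ioo A B) g)
    {x : ℝ} (hx : x ∈ Set.Ioo A B) : ∃ d, HasDerivWithinAt g d (Set.Ioi x) x := by
  have hconv : ConvexOn ℝ (Set.Ioo A B) (-g) := hconc.neg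
  obtain ⟨s, hs⟩ : ∃ s, s ∈ Set.Ioo A x := (Set.nonempty_Ioo.2 hx.1)
  have hsAB : s ∈ Set.Ioo A B := ⟨hs.1, hs.2.trans hx.2⟩
  have hmono : MonotoneOn (slope (-g) x) (Set.Ioo x B) :=
    (hconv.slope_mono hx).mono (fun z hz => ⟨⟨hx.1.trans hz.1, hz.2⟩, by simp [ne_of_gt hz.1]⟩)
  have hbdd : BddBelow (slope (-g) x '' Set.Ioo x B) := by
    refine ⟨slope (-g) x s, ?_⟩
    rintro _ ⟨z, hz, rfl⟩
    have hzAB : z ∈ Set.Ioo A B := ⟨hx.1.trans hz.1, hz.2⟩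
    have h := hconv.slope_mono_adjacent hsAB hzAB hs.2 hz.1
    rw [slope_comm, slope_def_field, slope_def_field]
    exact h
  have htends := MonotoneOn.tendsto_nhdsWithin_Ioo_right (Set.nonempty_Ioo.2 hx.2) hmono hbdd
  refine ⟨-sInf (slope (-g) x '' Set.Ioo x B), ?_⟩
  have h1 : HasDerivWithinAt (-g) (sInf (slope (-g) x '' Set.Ioo x B)) (Set.Ioi x) x :=
    (hasDerivWithinAt_iff_tendsto_slope' Set.self_notMem_Ioi).2 htends
  simpa using h1.neg

lemma key1d {A B : ℝ} (hAB : A < B) {g φ : ℝ → ℝ} {C : ℝ}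
    (hg : ContinuousOn g (Set.Icc A B)) (hconc : ConcaveOn ℝ (Set.Ioo A B) g)
    (hφm : AEMeasurable φ (volume.restrict (Set.Ioo A B)))
    (hae : ∀ᵐ x : ℝ, x ∈ Set.Ioo A B → HasDerivAt g (φ x) x ∧ |φ x| ≤ C)
    (hA : g A = 0) (hB : g B = 0) :
    ∫ x in Set.Ioo A B, φ x = 0 := by
  classical
  set E : Set ℝ := {x | x ∈ Set.Ioo A B ∧ HasDerivAt g (φ x) x ∧ |φ x| ≤ C} with hE
  have hEc : volume (Set.Ioo A B \ E) = 0 := by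
    refine measure_mono_null ?_ (ae_iff.1 hae)
    intro x hx
    simp only [Set.mem_setOf_eq, Classical.not_imp]
    exact ⟨hx.1, fun h => hx.2 ⟨hx.1, h⟩⟩
  have hEdense : ∀ a b : ℝ, A ≤ a → a < b → b ≤ B → (E ∩ Set.Ioo a b).Nonempty := by
    intro a b ha hab hb
    rw [Set.nonempty_iff_ne_empty]
    intro h
    have hsub : Set.Ioo a b ⊆ Set.Ioo A B \ E := by
      intro x hx
      refine ⟨⟨lt_of_le_of_lt ha hx.1, lt_of_lt_of_le hx.2 hb⟩, fun hxE => ?_⟩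
      have hmem : x ∈ E ∩ Set.Ioo a b := ⟨hxE, hx⟩
      rw [h] at hmem
      exact hmem
    have h0 := measure_mono_null hsub hEc
    rw [Real.volume_Ioo] at h0
    simp only [ENNReal.ofReal_eq_zero] at h0
    linarith
  have hex : ∀ x ∈ Set.Ioo A B, ∃ d : ℝ, HasDerivWithinAt g d (Set.Ioi x) x :=
    fun x hx => exists_right_deriv hconc hx
  choose! d hd using hex
  set g' : ℝ → ℝ := fun x => if x ∈ E then φ x else d x with hg'
  have hderiv : ∀ x ∈ Set.Ioo A B, HasDerivWithinAt g (g' x) (Set.Ioi x) x := by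
    intro x hx
    by_cases hxE : x ∈ E
    · simp only [hg', if_pos hxE]; exact hxE.2.1.hasDerivWithinAt
    · simp only [hg', if_neg hxE]; exact hd x hx
  have hbound : ∀ x ∈ Set.Ioo A B, |g' x| ≤ C := by
    intro x hx
    obtain ⟨s, hsE, hs⟩ := hEdense A x le_rfl hx.1 hx.2.le
    obtain ⟨t, htE, ht⟩ := hEdense x B hx.1.le hx.2 le_rfl
    have hsIoo : s ∈ Set.Ioo A B := ⟨hs.1, hs.2.trans hx.2⟩
    have htIoo : t ∈ Set.Ioo A B := ⟨hx.1.trans ht.1, ht.2⟩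
    have h1 : φ t ≤ slope g x t := hconc.le_slope_of_hasDerivAt hx htIoo ht.1 htE.2.1
    have h2 : slope g x t ≤ g' x := hconc.slope_le_of_hasDerivWithinAt_Ioi hx htIoo ht.1 (hderiv x hx)
    have h3 : slope g s x ≤ φ s := hconc.slope_le_of_hasDerivAt hsIoo hx hs.2 hsE.2.1
    have h4 : g' x ≤ slope g s x := by
      have htends : Filter.Tendsto (slope g x) (nhdsWithin x (Set.Ioi x)) (nhds (g' x)) :=
        (hasDerivWithinAt_iff_tendsto_slope' Set.self_notMem_Ioi).1 (hderiv x hx)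
      refine le_of_tendsto htends ?_
      filter_upwards [Ioo_mem_nhdsGT hx.2] with z hz
      have hzIoo : z ∈ Set.Ioo A B := ⟨hx.1.trans hz.1, hz.2⟩
      have h5 := hconc.slope_anti_adjacent hsIoo hzIoo hs.2 hz.1
      rw [slope_def_field, slope_def_field]
      exact h5
    have h6 := abs_le.1 hsE.2.2
    have h7 := abs_le.1 htE.2.2
    rw [abs_le]
    constructor <;> linarith
  have haeq : ∀ᵐ x ∂(volume.restrict (Set.Ioo A B)), g' x = φ x := by
    rw [ae_restrict_iff' measurableSet_Ioo]
    refine ae_iff.2 (measure_mono_null ?_ hEc)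
    intro x hx
    simp only [Set.mem_setOf_eq, Classical.not_imp] at hx
    refine ⟨hx.1, fun hxE => hx.2 ?_⟩
    simp [hg', if_pos hxE]
  have hint : IntervalIntegrable g' volume A B := by
    rw [intervalIntegrable_iff_integrableOn_Ioo_of_le hAB.le]
    have hm : AEStronglyMeasurable g' (volume.restrict (Set.Ioo A B)) :=
      (aestronglyMeasurable_congr (haeq.mono fun x h => h.symm)).1 hφm.aestronglyMeasurable
    refine Integrable.mono' (integrable_const C) hm ?_
    rw [ae_restrict_iff' measurableSet_Ioo]
    exact Filter.Eventually.of_forall fun x hx => by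
      simpa using hbound x hx
  have hFTC := intervalIntegral.integral_eq_sub_of_hasDeriv_right_of_le hAB.le hg hderiv hint
  have hz : ∫ x in A..B, g' x = 0 := by rw [hFTC, hA, hB]; ring
  calc ∫ x in Set.Ioo A B, φ x = ∫ x in Set.Ioo A B, g' x :=
        integral_congr_ae (haeq.mono fun x h => h.symm)
    _ = ∫ x in A..B, g' x := by
        rw [intervalIntegral.integral_of_le hAB.le, integral_Ioc_eq_integral_Ioo]
    _ = 0 := hz


lemma core2d (Ω : Set (ℝ × ℝ)) (hconv : Convex ℝ Ω) (hbdd : Bornology.IsBounded Ω)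
    (u : ℝ × ℝ → ℝ) (C : ℝ)
    (hcont : ContinuousOn u (closure Ω)) (hconc : ConcaveOn ℝ Ω u)
    (hdiff : ∀ᵐ p ∂(volume.restrict Ω), DifferentiableAt ℝ u p)
    (hC : ∀ p ∈ Ω, DifferentiableAt ℝ u p → |uY u p| ≤ C)
    (h0 : ∀ p ∈ frontier Ω, u p = 0) :
    ∫ p in Ω, uY u p = 0 := by
  classical
  have hvol : (volume : Measure (ℝ × ℝ)) = (volume : Measure ℝ).prod volume := rfl
  have hΩnm : NullMeasurableSet Ω volume :=
    nullMeasurableSet_of_null_frontier (hconv.addHaar_frontier (volume : Measure (ℝ × ℝ)))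
  obtain ⟨R, hR⟩ := hbdd.subset_closedBall (0 : ℝ × ℝ)
  set S : Set (ℝ × ℝ) := toMeasurable volume Ω with hS
  have hSm : MeasurableSet S := measurableSet_toMeasurable _ _
  have hSae : S =ᵐ[volume] Ω := NullMeasurableSet.toMeasurable_ae_eq hΩnm
  -- measurability of uY
  have hmeas : Measurable (uY u) := measurable_fderiv_apply_const ℝ u ((0 : ℝ), (1 : ℝ))
  -- integrability on Ω
  have hbd : ∀ᵐ p ∂(volume.restrict Ω), ‖uY u p‖ ≤ C := by
    filter_upwards [hdiff, ae_restrict_mem₀ hΩnm] with p h1 h2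
    simpa [Real.norm_eq_abs] using hC p h2 h1
  have hfin : volume Ω < ⊤ := hbdd.measure_lt_top
  have hintΩ : IntegrableOn (uY u) Ω volume := by
    refine Integrable.mono' (integrableOn_const (C := C) hfin.ne) hmeas.aestronglyMeasurable.restrict hbd
  have hintS : IntegrableOn (uY u) S volume := by
    rwa [IntegrableOn, Measure.restrict_congr_set hSae]
  set F' : ℝ × ℝ → ℝ := S.indicator (uY u) with hF'
  set F : ℝ × ℝ → ℝ := Ω.indicator (uY u) with hF
  have hintF' : Integrable F' volume := (integrable_indicator_iff hSm).2 hintS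
  -- a.e. goodness in slices
  have hdiffG : ∀ᵐ p : ℝ × ℝ, p ∈ Ω → DifferentiableAt ℝ u p :=
    (ae_restrict_iff'₀ hΩnm).1 hdiff
  have hFF' : F' =ᵐ[volume] F := indicator_ae_eq_of_ae_eq_set hSae
  have hdiffG2 : ∀ᵐ x : ℝ, ∀ᵐ y : ℝ, ((x, y) ∈ Ω → DifferentiableAt ℝ u (x, y)) := by
    rw [hvol] at hdiffG
    exact Measure.ae_ae_of_ae_prod hdiffG
  have hFF'2 : ∀ᵐ x : ℝ, ∀ᵐ y : ℝ, F' (x, y) = F (x, y) := by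
    rw [hvol] at hFF'
    exact Measure.ae_ae_of_ae_prod hFF'
  -- the inner integral vanishes for good x
  have hinner : ∀ x : ℝ, (∀ᵐ y : ℝ, ((x, y) ∈ Ω → DifferentiableAt ℝ u (x, y))) →
      ∫ y : ℝ, F (x, y) = 0 := by
    intro x hx
    set T : Set ℝ := {y : ℝ | (x, y) ∈ Ω} with hT
    have hTconv : Convex ℝ T := by
      intro y1 hy1 y2 hy2 a b ha hb hab
      have heq : a • ((x, y1) : ℝ × ℝ) + b • (x, y2) = (x, a * y1 + b * y2) := by
        simp only [Prod.smul_mk, Prod.mk_add_mk, smul_eq_mul, Prod.mk.injEq]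
        exact ⟨by rw [← add_mul, hab, one_mul], by trivial⟩
      have hmem := hconv hy1 hy2 ha hb hab
      rw [heq] at hmem
      simpa [hT, Set.mem_setOf_eq, smul_eq_mul] using hmem
    have hTm : MeasurableSet T := hTconv.ordConnected.measurableSet
    have hFind : ∀ y : ℝ, F (x, y) = T.indicator (fun y => uY u (x, y)) y := by
      intro y
      by_cases hy : (x, y) ∈ Ω
      · simp [hF, Set.indicator_of_mem hy, Set.indicator_of_mem (show y ∈ T from hy)]
      · simp [hF, Set.indicator_of_notMem hy, Set.indicator_of_notMem (show y ∉ T from hy)]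
    rcases Set.eq_empty_or_nonempty T with hTe | hTne
    · simp only [hFind, hTe, Set.indicator_empty]
      exact integral_zero _ _
    have hTbdd : ∀ y ∈ T, |y| ≤ R := by
      intro y hy
      have := hR hy
      rw [Metric.mem_closedBall, dist_zero_right, Prod.norm_def] at this
      exact le_trans (le_max_right _ _) this
    have hTbb : BddBelow T := ⟨-R, fun y hy => neg_le_of_abs_le (hTbdd y hy)⟩
    have hTba : BddAbove T := ⟨R, fun y hy => le_of_abs_le (hTbdd y hy)⟩
    set A := sInf T with hA
    set B := sSup T with hB
    have hAB : A ≤ B := Real.sInf_le_sSup _ hTbb hTba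
    have hTsub : T ⊆ Set.Icc A B := fun y hy => ⟨csInf_le hTbb hy, le_csSup hTba hy⟩
    have hIooT : Set.Ioo A B ⊆ T := by
      intro y hy
      obtain ⟨z, hzT, hzy⟩ := (csInf_lt_iff hTbb hTne).1 hy.1
      obtain ⟨w, hwT, hyw⟩ := (lt_csSup_iff hTba hTne).1 hy.2
      exact hTconv.ordConnected.out hzT hwT ⟨hzy.le, hyw.le⟩
    rcases eq_or_lt_of_le hAB with hABeq | hABlt
    · -- degenerate slice : T ⊆ {A}, null
      have hTnull : volume T = 0 := by
        refine measure_mono_null (hTsub.trans ?_) (Real.volume_singleton (a := A))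
        rw [← hABeq]
        exact fun y hy => by simpa using le_antisymm hy.2 hy.1
      have : (fun y : ℝ => F (x, y)) =ᵐ[volume] 0 := by
        have h1 : ∀ᵐ y : ℝ, y ∉ T := by
          rw [ae_iff]
          simpa using hTnull
        filter_upwards [h1] with y hy
        simp [hFind y, Set.indicator_of_notMem hy]
      rw [integral_congr_ae this]
      simp
    -- nondegenerate slice
    have hclossub : ∀ y ∈ Set.Icc A B, (x, y) ∈ closure Ω := by
      intro y hy
      have hAcl : A ∈ closure T := csInf_mem_closure hTne hTbb
      have hBcl : B ∈ closure T := csSup_mem_closure hTne hTba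
      have hycl : y ∈ closure T := by
        have hcc : Convex ℝ (closure T) := hTconv.closure
        exact hcc.ordConnected.out hAcl hBcl hy
      have : MapsTo (fun y : ℝ => ((x, y) : ℝ × ℝ)) T Ω := fun z hz => hz
      exact map_mem_closure (by fun_prop) hycl this
    have hgcont : ContinuousOn (fun y : ℝ => u (x, y)) (Set.Icc A B) := by
      refine ContinuousOn.comp hcont ?_ (fun y hy => hclossub y hy)
      fun_prop
    have hgconc : ConcaveOn ℝ (Set.Ioo A B) (fun y : ℝ => u (x, y)) := by
      refine ⟨convex_Ioo A B, fun y1 hy1 y2 hy2 a b ha hb hab => ?_⟩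
      have heq : a • ((x, y1) : ℝ × ℝ) + b • (x, y2) = (x, a * y1 + b * y2) := by
        simp only [Prod.smul_mk, Prod.mk_add_mk, smul_eq_mul, Prod.mk.injEq]
        exact ⟨by rw [← add_mul, hab, one_mul], by trivial⟩
      have h2 := hconc.2 (hIooT hy1) (hIooT hy2) ha hb hab
      rw [heq] at h2
      simpa [smul_eq_mul] using h2
    have hφm : AEMeasurable (fun y : ℝ => uY u (x, y)) (volume.restrict (Set.Ioo A B)) := by
      exact (hmeas.comp (by fun_prop : Measurable fun y : ℝ => ((x, y) : ℝ × ℝ))).aemeasurable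
    have hae1 : ∀ᵐ y : ℝ, y ∈ Set.Ioo A B →
        HasDerivAt (fun y : ℝ => u (x, y)) (uY u (x, y)) y ∧ |uY u (x, y)| ≤ C := by
      filter_upwards [hx] with y hy hyIoo
      have hyT : y ∈ T := hIooT hyIoo
      have hdu : DifferentiableAt ℝ u (x, y) := hy hyT
      constructor
      · have hline : HasDerivAt (fun y : ℝ => ((x, y) : ℝ × ℝ)) ((0 : ℝ), (1 : ℝ)) y :=
          (hasDerivAt_const y x).prodMk (hasDerivAt_id y)
        exact hdu.hasFDerivAt.comp_hasDerivAt y hline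
      · exact hC _ hyT hdu
    have hend : ∀ y0, (y0 = A ∨ y0 = B) → u (x, y0) = 0 := by
      intro y0 hy0
      have hy0AB : y0 ∈ Set.Icc A B := by
        rcases hy0 with h | h <;> rw [h]
        · exact ⟨le_rfl, hAB⟩
        · exact ⟨hAB, le_rfl⟩
      refine h0 _ ⟨hclossub y0 hy0AB, ?_⟩
      -- (x, y0) not in interior
      intro hint
      rw [mem_interior_iff_mem_nhds, Metric.mem_nhds_iff] at hint
      obtain ⟨ε, hε, hball⟩ := hint
      rcases hy0 with h | h
      · have hmem : (x, y0 - ε / 2) ∈ Ω := by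
          apply hball
          rw [Metric.mem_ball, Prod.dist_eq]
          simp only [dist_self, Real.dist_eq]
          rw [max_lt_iff]
          constructor
          · exact hε
          · rw [abs_of_nonpos (by linarith)]
            linarith
        have hmem2 : y0 - ε / 2 ∈ T := hmem
        have hle := csInf_le hTbb hmem2
        rw [← hA, ← h] at hle
        linarith
      · have hmem : (x, y0 + ε / 2) ∈ Ω := by
          apply hball
          rw [Metric.mem_ball, Prod.dist_eq]
          simp only [dist_self, Real.dist_eq]
          rw [max_lt_iff]
          constructor
          · exact hε
          · rw [abs_of_nonneg (by linarith)]
            linarith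
        have hmem2 : y0 + ε / 2 ∈ T := hmem
        have hle := le_csSup hTba hmem2
        rw [← hB, ← h] at hle
        linarith
    have hkey := key1d hABlt hgcont hgconc hφm hae1
      (hend A (Or.inl rfl)) (hend B (Or.inr rfl))
    -- now convert
    have hTIoo : T =ᵐ[volume] Set.Ioo A B := by
      have hAB0 : volume ({A, B} : Set ℝ) = 0 := (Set.toFinite _).measure_zero volume
      have hsub1 : T \ Set.Ioo A B ⊆ {A, B} := by
        intro y hy
        have h1 := hTsub hy.1
        have h2 := hy.2
        simp only [Set.mem_Ioo, not_and_or, not_lt] at h2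
        rcases h2 with h2 | h2
        · left; exact le_antisymm h2 h1.1
        · right; exact le_antisymm h1.2 h2
      rw [MeasureTheory.ae_eq_set]
      constructor
      · exact measure_mono_null hsub1 hAB0
      · rw [Set.diff_eq_empty.2 hIooT]
        simp
    calc ∫ y : ℝ, F (x, y) = ∫ y : ℝ, T.indicator (fun y => uY u (x, y)) y :=
          by simp only [hFind]
      _ = ∫ y in T, uY u (x, y) := integral_indicator hTm
      _ = ∫ y in Set.Ioo A B, uY u (x, y) := by rw [Measure.restrict_congr_set hTIoo]
      _ = 0 := hkey
  -- assemble via Fubini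
  have hmain : ∫ p in Ω, uY u p = ∫ p : ℝ × ℝ, F' p := by
    rw [hF', integral_indicator hSm]
    exact setIntegral_congr_set hSae.symm
  rw [hmain]
  have hprod : Integrable F' (volume.prod volume) := by rwa [← hvol]
  rw [hvol]
  rw [MeasureTheory.integral_prod _ hprod]
  have : ∀ᵐ x : ℝ, ∫ y : ℝ, F' (x, y) = 0 := by
    filter_upwards [hdiffG2, hFF'2] with x h1 h2
    rw [integral_congr_ae h2]
    exact hinner x h1
  rw [integral_congr_ae this]
  simp

lemma swap_partial (u : ℝ × ℝ → ℝ) (q : ℝ × ℝ) :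
    uY (fun r : ℝ × ℝ => u (r.2, r.1)) q = uX u (q.2, q.1) := by
  set e : (ℝ × ℝ) ≃L[ℝ] ℝ × ℝ := ContinuousLinearEquiv.prodComm ℝ ℝ ℝ with he
  have hce : ⇑e = fun r : ℝ × ℝ => ((r.2, r.1) : ℝ × ℝ) := rfl
  by_cases hd : DifferentiableAt ℝ u (q.2, q.1)
  · have h1 : (fun r : ℝ × ℝ => u (r.2, r.1)) = u ∘ ⇑e := by rw [hce]; rfl
    have h2 : fderiv ℝ (u ∘ ⇑e) q = (fderiv ℝ u (e q)).comp (e : (ℝ × ℝ) →L[ℝ] ℝ × ℝ) := by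
      rw [fderiv_comp (x := q) (by exact hd) e.differentiableAt, e.fderiv]
    rw [uY, uX, h1, h2]
    rfl
  · have hnd : ¬ DifferentiableAt ℝ (fun r : ℝ × ℝ => u (r.2, r.1)) q := by
      intro hcon
      have : DifferentiableAt ℝ ((fun r : ℝ × ℝ => u (r.2, r.1)) ∘ ⇑e) (q.2, q.1) := by
        apply hcon.comp
        · exact e.differentiableAt
      exact hd this
    rw [uY, uX, fderiv_zero_of_not_differentiableAt hd,
      fderiv_zero_of_not_differentiableAt hnd]
    rfl

lemma core2dX_transport (Ω : Set (ℝ × ℝ)) (hconv : Convex ℝ Ω) (hbdd : Bornology.IsBounded Ω)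
    (u : ℝ × ℝ → ℝ) (C : ℝ)
    (hcont : ContinuousOn u (closure Ω)) (hconc : ConcaveOn ℝ Ω u)
    (hdiff : ∀ᵐ p ∂(volume.restrict Ω), DifferentiableAt ℝ u p)
    (hCx : ∀ p ∈ Ω, DifferentiableAt ℝ u p → |uX u p| ≤ C)
    (h0 : ∀ p ∈ frontier Ω, u p = 0)
    (core : ∀ (Ω₁ : Set (ℝ × ℝ)), Convex ℝ Ω₁ → Bornology.IsBounded Ω₁ →
      ∀ (u₁ : ℝ × ℝ → ℝ) (C₁ : ℝ), ContinuousOn u₁ (closure Ω₁) → ConcaveOn ℝ Ω₁ u₁ →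
      (∀ᵐ p ∂(volume.restrict Ω₁), DifferentiableAt ℝ u₁ p) →
      (∀ p ∈ Ω₁, DifferentiableAt ℝ u₁ p → |uY u₁ p| ≤ C₁) →
      (∀ p ∈ frontier Ω₁, u₁ p = 0) → ∫ p in Ω₁, uY u₁ p = 0) :
    ∫ p in Ω, uX u p = 0 := by
  classical
  set e : (ℝ × ℝ) ≃L[ℝ] ℝ × ℝ := ContinuousLinearEquiv.prodComm ℝ ℝ ℝ with he
  set v : ℝ × ℝ → ℝ := fun r => u (r.2, r.1) with hv
  set Ω' : Set (ℝ × ℝ) := Prod.swap ⁻¹' Ω with hΩ'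
  have hswap_mem : ∀ q : ℝ × ℝ, q ∈ Ω' ↔ ((q.2, q.1) : ℝ × ℝ) ∈ Ω := fun q => Iff.rfl
  have hconv' : Convex ℝ Ω' :=
    hconv.linear_preimage (LinearEquiv.prodComm ℝ ℝ ℝ).toLinearMap
  have hbdd' : Bornology.IsBounded Ω' := by
    obtain ⟨R, hR⟩ := hbdd.subset_closedBall 0
    refine Metric.isBounded_closedBall.subset (?_ : Ω' ⊆ Metric.closedBall 0 R)
    intro q hq
    have := hR hq
    rw [Metric.mem_closedBall, dist_zero_right] at this ⊢
    rw [Prod.norm_def] at this ⊢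
    rw [max_comm]
    exact this
  have hclos : closure Ω' = Prod.swap ⁻¹' closure Ω := by
    exact ((Homeomorph.prodComm ℝ ℝ).preimage_closure Ω).symm
  have hcont' : ContinuousOn v (closure Ω') := by
    rw [hclos]
    exact hcont.comp continuous_swap.continuousOn (fun q hq => hq)
  have hconc' : ConcaveOn ℝ Ω' v := by
    refine ⟨hconv', fun q1 hq1 q2 hq2 a b ha hb hab => ?_⟩
    exact hconc.2 hq1 hq2 ha hb hab
  have hΩ'nm : NullMeasurableSet Ω' volume :=
    nullMeasurableSet_of_null_frontier (hconv'.addHaar_frontier (volume : Measure (ℝ × ℝ)))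
  have hΩnm : NullMeasurableSet Ω volume :=
    nullMeasurableSet_of_null_frontier (hconv.addHaar_frontier (volume : Measure (ℝ × ℝ)))
  have mp : MeasurePreserving (Prod.swap : ℝ × ℝ → ℝ × ℝ) volume volume := by
    rw [show (volume : Measure (ℝ × ℝ)) = (volume : Measure ℝ).prod volume from rfl]
    exact Measure.measurePreserving_swap
  have hdiff_equiv : ∀ q : ℝ × ℝ, DifferentiableAt ℝ u (q.2, q.1) → DifferentiableAt ℝ v q := by
    intro q hd
    have : DifferentiableAt ℝ (u ∘ ⇑e) q := hd.comp q e.differentiableAt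
    exact this
  have hglobal : ∀ᵐ p : ℝ × ℝ, p ∈ Ω → DifferentiableAt ℝ u p :=
    (ae_restrict_iff'₀ hΩnm).1 hdiff
  have hglobal' : ∀ᵐ q : ℝ × ℝ, q ∈ Ω' → DifferentiableAt ℝ v q := by
    set N : Set (ℝ × ℝ) := toMeasurable volume {p : ℝ × ℝ | ¬(p ∈ Ω → DifferentiableAt ℝ u p)}
      with hN
    have hNnull : volume N = 0 := by
      rw [hN, measure_toMeasurable]
      exact ae_iff.1 hglobal
    have hNm : MeasurableSet N := measurableSet_toMeasurable _ _
    have hNpre : volume (Prod.swap ⁻¹' N : Set (ℝ × ℝ)) = 0 := by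
      rw [mp.measure_preimage hNm.nullMeasurableSet, hNnull]
    rw [ae_iff]
    refine measure_mono_null ?_ hNpre
    intro q hq
    simp only [Set.mem_setOf_eq, Classical.not_imp] at hq
    refine subset_toMeasurable _ _ ?_
    simp only [Set.mem_setOf_eq, Classical.not_imp]
    refine ⟨hq.1, fun hd => hq.2 (hdiff_equiv q hd)⟩
  have hdiff' : ∀ᵐ q ∂(volume.restrict Ω'), DifferentiableAt ℝ v q :=
    (ae_restrict_iff'₀ hΩ'nm).2 hglobal'
  have hdiff_equiv' : ∀ q : ℝ × ℝ, DifferentiableAt ℝ v q → DifferentiableAt ℝ u (q.2, q.1) := by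
    intro q hd
    have : DifferentiableAt ℝ (v ∘ ⇑e) (q.2, q.1) := by
      apply hd.comp
      exact e.differentiableAt
    exact this
  have hC' : ∀ q ∈ Ω', DifferentiableAt ℝ v q → |uY v q| ≤ C := by
    intro q hq hd
    rw [swap_partial]
    exact hCx _ hq (hdiff_equiv' q hd)
  have h0' : ∀ q ∈ frontier Ω', v q = 0 := by
    intro q hq
    have : frontier Ω' = Prod.swap ⁻¹' frontier Ω :=
      ((Homeomorph.prodComm ℝ ℝ).preimage_frontier Ω).symm
    rw [this] at hq
    exact h0 _ hq
  have hres := core Ω' hconv' hbdd' v C hcont' hconc' hdiff' hC' h0'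
  have hcongr : ∫ q in Ω', uY v q = ∫ q in Ω', uX u (q.2, q.1) := by
    refine setIntegral_congr_ae₀ hΩ'nm ?_
    exact Filter.Eventually.of_forall fun q _ => swap_partial u q
  have hchange : ∫ q in Ω', uX u (q.2, q.1) = ∫ p in Ω, uX u p := by
    have := mp.setIntegral_preimage_emb MeasurableEquiv.prodComm.measurableEmbedding
      (uX u) Ω
    exact this
  rw [← hchange, ← hcongr, hres]

lemma uX_const_mul {ε : ℝ} (hε : ε ≠ 0) (u : ℝ × ℝ → ℝ) (p : ℝ × ℝ) :
    uX (fun q => ε * u q) p = ε * uX u p := by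
  have hue : u = fun q => ε⁻¹ * (ε * u q) := by
    funext q; rw [← mul_assoc, inv_mul_cancel₀ hε, one_mul]
  by_cases hd : DifferentiableAt ℝ u p
  · rw [uX, uX, fderiv_const_mul hd ε]
    rfl
  · have hnd : ¬ DifferentiableAt ℝ (fun q => ε * u q) p := by
      intro hcon
      exact hd (hue ▸ hcon.const_mul ε⁻¹)
    rw [uX, uX, fderiv_zero_of_not_differentiableAt hd, fderiv_zero_of_not_differentiableAt hnd]
    simp

lemma uY_const_mul {ε : ℝ} (hε : ε ≠ 0) (u : ℝ × ℝ → ℝ) (p : ℝ × ℝ) :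
    uY (fun q => ε * u q) p = ε * uY u p := by
  have hue : u = fun q => ε⁻¹ * (ε * u q) := by
    funext q; rw [← mul_assoc, inv_mul_cancel₀ hε, one_mul]
  by_cases hd : DifferentiableAt ℝ u p
  · rw [uY, uY, fderiv_const_mul hd ε]
    rfl
  · have hnd : ¬ DifferentiableAt ℝ (fun q => ε * u q) p := by
      intro hcon
      exact hd (hue ▸ hcon.const_mul ε⁻¹)
    rw [uY, uY, fderiv_zero_of_not_differentiableAt hd, fderiv_zero_of_not_differentiableAt hnd]
    simp

lemma norm_one_zero : ‖((1 : ℝ), (0 : ℝ))‖ = 1 := by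
  rw [Prod.norm_def]
  simp

lemma norm_zero_one : ‖((0 : ℝ), (1 : ℝ))‖ = 1 := by
  rw [Prod.norm_def]
  simp

lemma abs_uX_le {u : ℝ × ℝ → ℝ} {p : ℝ × ℝ} {C : ℝ} (h : ‖fderiv ℝ u p‖ ≤ C) : |uX u p| ≤ C := by
  have := (fderiv ℝ u p).le_opNorm ((1 : ℝ), (0 : ℝ))
  rw [norm_one_zero, mul_one] at this
  calc |uX u p| = ‖fderiv ℝ u p (1, 0)‖ := rfl
    _ ≤ ‖fderiv ℝ u p‖ := this
    _ ≤ C := h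

lemma abs_uY_le {u : ℝ × ℝ → ℝ} {p : ℝ × ℝ} {C : ℝ} (h : ‖fderiv ℝ u p‖ ≤ C) : |uY u p| ≤ C := by
  have := (fderiv ℝ u p).le_opNorm ((0 : ℝ), (1 : ℝ))
  rw [norm_zero_one, mul_one] at this
  calc |uY u p| = ‖fderiv ℝ u p (0, 1)‖ := rfl
    _ ≤ ‖fderiv ℝ u p‖ := this
    _ ≤ C := h

theorem stmt6 (Ω : Set (ℝ × ℝ)) (hconv : Convex ℝ Ω) (hbdd : Bornology.IsBounded Ω)
    (hint : (interior Ω).Nonempty)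
    (hangL : AngularSupportAt Ω (leftX Ω)) (hangR : AngularSupportAt Ω (rightX Ω))
    (K : ℝ) (hK0 : 0 < K)
    (hKub : ∀ u : ℝ × ℝ → ℝ, MemU Ω u → Ix Ω u ≤ K * Iy Ω u)
    (hKlub : ∀ K' : ℝ, K' < K → ∃ u : ℝ × ℝ → ℝ, MemU Ω u ∧ (∃ p ∈ Ω, u p ≠ 0) ∧
      K' * Iy Ω u < Ix Ω u)
    (f : ℝ × ℝ → ℝ) (hf : Continuous f) (α β a b : ℝ) (ha : 0 < a) (hb : 0 < b)
    (hTaylor : (fun ζ : ℝ × ℝ =>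
        f ζ - (f 0 + α * ζ.1 + β * ζ.2 - a * ζ.1 ^ 2 + b * ζ.2 ^ 2))
        =o[nhds (0 : ℝ × ℝ)] fun ζ : ℝ × ℝ => ‖ζ‖ ^ 2)
    (hba : b / a < K) :
    ¬ ZeroIsLocalMin Ω f := by
  classical
  intro hZ
  obtain ⟨δ, hδ, hmin⟩ := hZ
  obtain ⟨u, hu, hune, hlt⟩ := hKlub (b / a) hba
  obtain ⟨hcont, hconc, hdiff, ⟨C0, hC0⟩, hbnd⟩ := hu
  set C : ℝ := max C0 0 with hCdef
  have hCnn : 0 ≤ C := le_max_right _ _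
  have hC' : ∀ p ∈ Ω, DifferentiableAt ℝ u p → ‖fderiv ℝ u p‖ ≤ C :=
    fun p hp hd => (hC0 p hp hd).trans (le_max_left _ _)
  have hIy0 : 0 ≤ Iy Ω u := integral_nonneg fun p => sq_nonneg _
  have hIyK : Ix Ω u ≤ K * Iy Ω u := hKub u ⟨hcont, hconc, hdiff, ⟨C0, hC0⟩, hbnd⟩
  have hIypos : 0 < Iy Ω u := by
    rcases lt_or_eq_of_le hIy0 with h | h
    · exact h
    · exfalso
      rw [← h] at hIyK hlt
      simp only [mul_zero] at hIyK hlt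
      linarith
  have hbaIy : b * Iy Ω u < a * Ix Ω u := by
    have h := mul_lt_mul_of_pos_left hlt ha
    rw [show a * (b / a * Iy Ω u) = b * Iy Ω u from by field_simp] at h
    exact h
  set Q : ℝ := a * Ix Ω u - b * Iy Ω u with hQdef
  have hQpos : 0 < Q := by rw [hQdef]; linarith
  have hIx0 : 0 ≤ Ix Ω u := integral_nonneg fun p => sq_nonneg _
  have hΩnm : NullMeasurableSet Ω volume :=
    nullMeasurableSet_of_null_frontier (hconv.addHaar_frontier (volume : Measure (ℝ × ℝ)))
  have hfin : volume Ω < ⊤ := hbdd.measure_lt_top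
  -- sup bound for |u|
  have hcomp : IsCompact (closure Ω) :=
    Metric.isCompact_of_isClosed_isBounded isClosed_closure hbdd.closure
  obtain ⟨M0, hM0⟩ := hcomp.exists_bound_of_continuousOn hcont
  set M : ℝ := max M0 0 with hMdef
  have hMnn : 0 ≤ M := le_max_right _ _
  have hM : ∀ p ∈ Ω, |u p| ≤ M := fun p hp => by
    have := hM0 p (subset_closure hp)
    rw [Real.norm_eq_abs] at this
    exact this.trans (le_max_left _ _)
  -- little-o data
  set Rm : (ℝ × ℝ) → ℝ :=
    fun ζ => f ζ - (f 0 + α * ζ.1 + β * ζ.2 - a * ζ.1 ^ 2 + b * ζ.2 ^ 2) with hRmdef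
  set η : ℝ := Q / (2 * (Ix Ω u + Iy Ω u + 1)) with hηdef
  have hηpos : 0 < η := by
    rw [hηdef]
    apply div_pos hQpos
    linarith
  have hev := hTaylor.def hηpos
  rw [Metric.eventually_nhds_iff] at hev
  obtain ⟨r, hrpos, hRb⟩ := hev
  -- choose ε
  set ε : ℝ := min (δ / (2 * (M + C + C + 1))) (r / (2 * (C + 1))) with hεdef
  have hεpos : 0 < ε := lt_min (by positivity) (by positivity)
  have hεne : ε ≠ 0 := hεpos.ne'
  have hε1 : ε * (M + C + C) < δ := by
    have h1 : ε ≤ δ / (2 * (M + C + C + 1)) := min_le_left _ _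
    have h2 : ε * (M + C + C) ≤ δ / (2 * (M + C + C + 1)) * (M + C + C) :=
      mul_le_mul_of_nonneg_right h1 (by linarith)
    have h3 : δ / (2 * (M + C + C + 1)) * (M + C + C) < δ := by
      rw [div_mul_eq_mul_div, div_lt_iff₀ (by linarith)]
      nlinarith
    linarith
  have hεC : ε * C < r := by
    have h1 : ε ≤ r / (2 * (C + 1)) := min_le_right _ _
    have h2 : ε * C ≤ r / (2 * (C + 1)) * C := mul_le_mul_of_nonneg_right h1 hCnn
    have h3 : r / (2 * (C + 1)) * C < r := by
      rw [div_mul_eq_mul_div, div_lt_iff₀ (by linarith)]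
      nlinarith
    linarith
  -- the competitor
  set u' : ℝ × ℝ → ℝ := fun p => ε * u p with hu'def
  have hue : u = fun q => ε⁻¹ * (ε * u q) := by
    funext q; rw [← mul_assoc, inv_mul_cancel₀ hεne, one_mul]
  have hu'cont : ContinuousOn u' (closure Ω) := continuousOn_const.mul hcont
  have hu'conc : ConcaveOn ℝ Ω u' := hconc.smul hεpos.le
  have hdiff' : ∀ᵐ p ∂(volume.restrict Ω), DifferentiableAt ℝ u' p :=
    hdiff.mono fun p hp => hp.const_mul ε
  have hu'grad : ∀ p ∈ Ω, DifferentiableAt ℝ u' p → ‖fderiv ℝ u' p‖ ≤ ε * C := by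
    intro p hp hd
    have hdu : DifferentiableAt ℝ u p := hue ▸ hd.const_mul ε⁻¹
    rw [hu'def]
    rw [fderiv_const_mul hdu ε, norm_smul, Real.norm_eq_abs, abs_of_pos hεpos]
    exact mul_le_mul_of_nonneg_left (hC' p hp hdu) hεpos.le
  have hbnd' : ∀ p ∈ frontier Ω, u' p = 0 := fun p hp => by
    rw [hu'def]; dsimp only; rw [hbnd p hp, mul_zero]
  have hMem : MemU Ω u' := ⟨hu'cont, hu'conc, hdiff', ⟨ε * C, hu'grad⟩, hbnd'⟩
  -- C¹ norm bound
  have hnorm : C1Norm Ω u' < δ := by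
    have h1 : sSup ((fun p => |u' p|) '' Ω) ≤ ε * M := by
      refine Real.sSup_le ?_ (by positivity)
      rintro x ⟨p, hp, rfl⟩
      dsimp only [hu'def]
      rw [abs_mul, abs_of_pos hεpos]
      exact mul_le_mul_of_nonneg_left (hM p hp) hεpos.le
    have h2 : sSup ((fun p => |uX u' p|) '' {p ∈ Ω | DifferentiableAt ℝ u' p}) ≤ ε * C := by
      refine Real.sSup_le ?_ (by positivity)
      rintro x ⟨p, ⟨hp, hd⟩, rfl⟩
      exact abs_uX_le (hu'grad p hp hd)
    have h3 : sSup ((fun p => |uY u' p|) '' {p ∈ Ω | DifferentiableAt ℝ u' p}) ≤ ε * C := by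
      refine Real.sSup_le ?_ (by positivity)
      rintro x ⟨p, ⟨hp, hd⟩, rfl⟩
      exact abs_uY_le (hu'grad p hp hd)
    calc C1Norm Ω u' ≤ ε * M + (ε * C) + (ε * C) := by
          unfold C1Norm
          exact add_le_add (add_le_add h1 h2) h3
      _ = ε * (M + C + C) := by ring
      _ < δ := hε1
  -- vanishing of linear terms
  have hJy : ∫ p in Ω, uY u p = 0 :=
    core2d Ω hconv hbdd u C hcont hconc hdiff
      (fun p hp hd => abs_uY_le (hC' p hp hd)) hbnd
  have hJx : ∫ p in Ω, uX u p = 0 :=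
    core2dX_transport Ω hconv hbdd u C hcont hconc hdiff
      (fun p hp hd => abs_uX_le (hC' p hp hd)) hbnd
      (fun Ω₁ h1 h2 u₁ C₁ h3 h4 h5 h6 h7 => core2d Ω₁ h1 h2 u₁ C₁ h3 h4 h5 h6 h7)
  -- integrability facts
  have hmeasX : Measurable (uX u) := measurable_fderiv_apply_const ℝ u ((1 : ℝ), (0 : ℝ))
  have hmeasY : Measurable (uY u) := measurable_fderiv_apply_const ℝ u ((0 : ℝ), (1 : ℝ))
  have haeX : ∀ᵐ p ∂(volume.restrict Ω), |uX u p| ≤ C := by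
    filter_upwards [hdiff, ae_restrict_mem₀ hΩnm] with p h1 h2
    exact abs_uX_le (hC' p h2 h1)
  have haeY : ∀ᵐ p ∂(volume.restrict Ω), |uY u p| ≤ C := by
    filter_upwards [hdiff, ae_restrict_mem₀ hΩnm] with p h1 h2
    exact abs_uY_le (hC' p h2 h1)
  have hconstInt : ∀ c : ℝ, IntegrableOn (fun _ : ℝ × ℝ => c) Ω volume :=
    fun c => integrableOn_const (C := c) hfin.ne
  have hiX : IntegrableOn (uX u) Ω volume := by
    refine Integrable.mono' (hconstInt C) hmeasX.aestronglyMeasurable.restrict ?_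
    filter_upwards [haeX] with p hp
    rwa [Real.norm_eq_abs]
  have hiY : IntegrableOn (uY u) Ω volume := by
    refine Integrable.mono' (hconstInt C) hmeasY.aestronglyMeasurable.restrict ?_
    filter_upwards [haeY] with p hp
    rwa [Real.norm_eq_abs]
  have hiX2 : IntegrableOn (fun p => (uX u p) ^ 2) Ω volume := by
    refine Integrable.mono' (hconstInt (C ^ 2))
      ((hmeasX.pow_const 2).aestronglyMeasurable.restrict) ?_
    filter_upwards [haeX] with p hp
    rw [Real.norm_eq_abs, abs_pow]
    gcongr
  have hiY2 : IntegrableOn (fun p => (uY u p) ^ 2) Ω volume := by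
    refine Integrable.mono' (hconstInt (C ^ 2))
      ((hmeasY.pow_const 2).aestronglyMeasurable.restrict) ?_
    filter_upwards [haeY] with p hp
    rw [Real.norm_eq_abs, abs_pow]
    gcongr
  -- the remainder term
  set ζf : (ℝ × ℝ) → ℝ × ℝ := fun p => (ε * uX u p, ε * uY u p) with hζdef
  have hRcont : Continuous Rm := by
    rw [hRmdef]
    fun_prop
  have hζmeas : Measurable ζf :=
    (measurable_const.mul hmeasX).prodMk (measurable_const.mul hmeasY)
  have hζbd : ∀ᵐ p ∂(volume.restrict Ω),
      ‖ζf p‖ < r ∧ ‖ζf p‖ ^ 2 ≤ ε ^ 2 * ((uX u p) ^ 2 + (uY u p) ^ 2) := by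
    filter_upwards [haeX, haeY] with p h1 h2
    have hab1 : |ε * uX u p| ≤ ε * C := by
      rw [abs_mul, abs_of_pos hεpos]
      exact mul_le_mul_of_nonneg_left h1 hεpos.le
    have hab2 : |ε * uY u p| ≤ ε * C := by
      rw [abs_mul, abs_of_pos hεpos]
      exact mul_le_mul_of_nonneg_left h2 hεpos.le
    have hn : ‖ζf p‖ = max |ε * uX u p| |ε * uY u p| := by
      rw [hζdef]; rw [Prod.norm_def]; rfl
    constructor
    · rw [hn]
      exact lt_of_le_of_lt (max_le hab1 hab2) hεC
    · rw [hn]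
      rcases max_cases |ε * uX u p| |ε * uY u p| with ⟨hmax, _⟩ | ⟨hmax, _⟩ <;>
        rw [hmax]
      · rw [sq_abs]
        nlinarith [sq_nonneg (uY u p), sq_nonneg ε]
      · rw [sq_abs]
        nlinarith [sq_nonneg (uX u p), sq_nonneg ε]
  have hRbd : ∀ᵐ p ∂(volume.restrict Ω), |Rm (ζf p)| ≤ η * ‖ζf p‖ ^ 2 := by
    filter_upwards [hζbd] with p hp
    have h0 := hRb (y := ζf p) (by rw [dist_zero_right]; exact hp.1)
    rw [Real.norm_eq_abs, Real.norm_eq_abs] at h0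
    rwa [abs_of_nonneg (by positivity : (0:ℝ) ≤ ‖ζf p‖ ^ 2)] at h0
  have hiρ : IntegrableOn (fun p => Rm (ζf p)) Ω volume := by
    refine Integrable.mono' (hconstInt (η * (ε * C) ^ 2))
      ((hRcont.measurable.comp hζmeas).aestronglyMeasurable.restrict) ?_
    filter_upwards [hRbd, haeX, haeY] with p h1 h2 h3
    rw [Real.norm_eq_abs]
    refine h1.trans ?_
    have hab1 : |ε * uX u p| ≤ ε * C := by
      rw [abs_mul, abs_of_pos hεpos]
      exact mul_le_mul_of_nonneg_left h2 hεpos.le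
    have hab2 : |ε * uY u p| ≤ ε * C := by
      rw [abs_mul, abs_of_pos hεpos]
      exact mul_le_mul_of_nonneg_left h3 hεpos.le
    have hn : ‖ζf p‖ = max |ε * uX u p| |ε * uY u p| := by
      rw [hζdef]; rw [Prod.norm_def]; rfl
    have h4 : ‖ζf p‖ ≤ ε * C := by rw [hn]; exact max_le hab1 hab2
    have h5 : ‖ζf p‖ ^ 2 ≤ (ε * C) ^ 2 := by
      apply pow_le_pow_left₀ (norm_nonneg _) h4
    exact mul_le_mul_of_nonneg_left h5 hηpos.le
  have hρle : ∫ p in Ω, Rm (ζf p) ≤ η * ε ^ 2 * (Ix Ω u + Iy Ω u) := by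
    have hstep : ∫ p in Ω, Rm (ζf p) ≤
        ∫ p in Ω, η * ε ^ 2 * ((uX u p) ^ 2 + (uY u p) ^ 2) := by
      refine integral_mono_ae hiρ ((hiX2.add hiY2).const_mul _) ?_
      filter_upwards [hRbd, hζbd] with p h1 h2
      calc Rm (ζf p) ≤ |Rm (ζf p)| := le_abs_self _
        _ ≤ η * ‖ζf p‖ ^ 2 := h1
        _ ≤ η * (ε ^ 2 * ((uX u p) ^ 2 + (uY u p) ^ 2)) :=
            mul_le_mul_of_nonneg_left h2.2 hηpos.le
        _ = η * ε ^ 2 * ((uX u p) ^ 2 + (uY u p) ^ 2) := by ring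
    refine hstep.trans ?_
    rw [integral_const_mul, integral_add hiX2 hiY2]
    unfold Ix Iy
    exact le_refl _
  -- expansion of the functional
  have hsum1 : IntegrableOn (fun p => f 0 + (ε * α) * uX u p + (ε * β) * uY u p
      + (b * ε ^ 2) * (uY u p) ^ 2 - (a * ε ^ 2) * (uX u p) ^ 2) Ω volume := by
    have hS1 : IntegrableOn (fun p => f 0 + (ε * α) * uX u p) Ω volume :=
      (hconstInt (f 0)).add (hiX.const_mul _)
    have hS2 : IntegrableOn (fun p => f 0 + (ε * α) * uX u p + (ε * β) * uY u p) Ω volume :=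
      hS1.add (hiY.const_mul _)
    have hS3 : IntegrableOn (fun p => f 0 + (ε * α) * uX u p + (ε * β) * uY u p
        + (b * ε ^ 2) * (uY u p) ^ 2) Ω volume := hS2.add (hiY2.const_mul _)
    exact hS3.sub (hiX2.const_mul _)
  have hptw : ∀ p, f (uX u' p, uY u' p) = (f 0 + (ε * α) * uX u p + (ε * β) * uY u p
      + (b * ε ^ 2) * (uY u p) ^ 2 - (a * ε ^ 2) * (uX u p) ^ 2) + Rm (ζf p) := by
    intro p
    rw [hu'def]
    rw [uX_const_mul hεne, uY_const_mul hεne]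
    rw [hRmdef, hζdef]
    dsimp only
    ring
  have hFres : Fres Ω f u' = (volume Ω).toReal * f 0
      + (ε ^ 2 * (b * Iy Ω u - a * Ix Ω u) + ∫ p in Ω, Rm (ζf p)) := by
    unfold Fres
    rw [integral_congr_ae (Filter.Eventually.of_forall fun p => hptw p)]
    rw [integral_add hsum1 hiρ]
    have hS1 : IntegrableOn (fun p => f 0 + (ε * α) * uX u p) Ω volume :=
      (hconstInt (f 0)).add (hiX.const_mul _)
    have hS2 : IntegrableOn (fun p => f 0 + (ε * α) * uX u p + (ε * β) * uY u p) Ω volume :=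
      hS1.add (hiY.const_mul _)
    have hS3 : IntegrableOn (fun p => f 0 + (ε * α) * uX u p + (ε * β) * uY u p
        + (b * ε ^ 2) * (uY u p) ^ 2) Ω volume := hS2.add (hiY2.const_mul _)
    rw [integral_sub hS3 (hiX2.const_mul _)]
    rw [integral_add hS2 (hiY2.const_mul _)]
    rw [integral_add hS1 (hiY.const_mul _)]
    rw [integral_add (hconstInt (f 0)) (hiX.const_mul _)]
    rw [integral_const_mul, integral_const_mul, integral_const_mul, integral_const_mul]
    rw [hJx, hJy, setIntegral_const, smul_eq_mul]
    rw [measureReal_def]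
    unfold Ix Iy
    ring
  have hF0 : Fres Ω f (fun _ => (0 : ℝ)) = (volume Ω).toReal * f 0 := by
    unfold Fres
    have hz : ∀ p : ℝ × ℝ, f (uX (fun _ => (0 : ℝ)) p, uY (fun _ => (0 : ℝ)) p) = f 0 := by
      intro p
      have h1 : uX (fun _ => (0 : ℝ)) p = 0 := by
        rw [uX, fderiv_fun_const]
        simp
      have h2 : uY (fun _ => (0 : ℝ)) p = 0 := by
        rw [uY, fderiv_fun_const]
        simp
      rw [h1, h2]
      rfl
    rw [integral_congr_ae (Filter.Eventually.of_forall fun p => hz p), setIntegral_const,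
      smul_eq_mul, measureReal_def]
  -- final contradiction
  have hη2 : η * (Ix Ω u + Iy Ω u) ≤ Q / 2 := by
    rw [hηdef, div_mul_eq_mul_div, div_le_div_iff₀ (by linarith) (by norm_num)]
    nlinarith
  have hfinal : Fres Ω f u' < Fres Ω f (fun _ => (0 : ℝ)) := by
    rw [hFres, hF0]
    have he2 : (0 : ℝ) < ε ^ 2 := by positivity
    have h6 : η * ε ^ 2 * (Ix Ω u + Iy Ω u) = ε ^ 2 * (η * (Ix Ω u + Iy Ω u)) := by ring
    have h7 : ε ^ 2 * (b * Iy Ω u - a * Ix Ω u) = ε ^ 2 * (-Q) := by rw [hQdef]; ring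
    have h8 := mul_le_mul_of_nonneg_left hη2 he2.le
    nlinarith
  have hcontra := hmin u' hMem hnorm
  linarith
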